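/- Let u, ũ be probability densities on [−1, 1] and fix an integer L ≥ 1 with h = 2/L and grid points t_j = −1 + jh for j = 0, …, L. Suppose u and ũ assign the same mass to each cell: ∫_{t_j}^{t_{j+1}} u(s) ds = ∫_{t_j}^{t_{j+1}} ũ(s) ds for all j = 0, …, L−1. Then their quantile functions satisfy |Q_u(z) − Q_ũ(z)| ≤ h for all z ∈ (0, 1), and consequently the 1-D 2-Wasserstein distance satisfies d_{W2}(u, ũ) ≤ h. -/

import Mathlib

open MeasureTheory Real Set

/-- CDF of a density `μ` on `ℝ`: `F_μ(t) = ∫_{-∞}^t μ`. -/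
noncomputable def cdfOf (μ : ℝ → ℝ) (t : ℝ) : ℝ := ∫ x in Set.Iic t, μ x

/-- Quantile function `Q_μ(z) = inf {t : F_μ(t) ≥ z}`. -/
noncomputable def quantileOf (μ : ℝ → ℝ) (z : ℝ) : ℝ := sInf {t : ℝ | z ≤ cdfOf μ t}

/-- `d_{Wp}^p(μ, ν) = ∫₀¹ |Q_μ(z) − Q_ν(z)|^p dz`. -/
noncomputable def wassersteinPow (p : ℝ) (μ ν : ℝ → ℝ) : ℝ :=
  ∫ z in Set.Ioo (0:ℝ) 1, |quantileOf μ z - quantileOf ν z| ^ p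

/-- 1-D `p`-Wasserstein distance between densities. -/
noncomputable def wasserstein (p : ℝ) (μ ν : ℝ → ℝ) : ℝ :=
  (wassersteinPow p μ ν) ^ (1 / p)

/-- Line projection of an image `f : ℝ² → ℝ` at angle `θ`:
`P_θ f(s) = ∫ f(s(cos θ, sin θ) + t(−sin θ, cos θ)) dt`. -/
noncomputable def lineProj (f : ℝ × ℝ → ℝ) (θ : ℝ) (s : ℝ) : ℝ :=
  ∫ t : ℝ, f (s * Real.cos θ - t * Real.sin θ, s * Real.sin θ + t * Real.cos θ)

/-- `d_{SWp}^p(f, g) = (1/2π) ∫₀^{2π} d_{Wp}^p(P_θ f, P_θ g) dθ`. -/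
noncomputable def slicedWassersteinPow (p : ℝ) (f g : ℝ × ℝ → ℝ) : ℝ :=
  (1 / (2 * Real.pi)) * ∫ θ in Set.Ioo (0:ℝ) (2 * Real.pi),
    wassersteinPow p (lineProj f θ) (lineProj g θ)

/-- Sliced `p`-Wasserstein distance between two images. -/
noncomputable def slicedWasserstein (p : ℝ) (f g : ℝ × ℝ → ℝ) : ℝ :=
  (slicedWassersteinPow p f g) ^ (1 / p)

/-- Rotation of an image by angle `α`: `(R_α g)(x) = g(R_α⁻¹ x)`. -/
noncomputable def rotImage (α : ℝ) (g : ℝ × ℝ → ℝ) : ℝ × ℝ → ℝ :=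
  fun x => g (x.1 * Real.cos α + x.2 * Real.sin α, -x.1 * Real.sin α + x.2 * Real.cos α)

lemma integrable_of_supp {u : ℝ → ℝ}
    (hsupp : ∀ x, x ∉ Set.Icc (-1:ℝ) 1 → u x = 0)
    (hint : ∫ x in (-1:ℝ)..1, u x = 1) : Integrable u := by
  have h1 : IntervalIntegrable u volume (-1) 1 := by
    by_contra hc
    rw [intervalIntegral.integral_undef hc] at hint; norm_num at hint
  have h2 : IntegrableOn u (Set.Ioc (-1:ℝ) 1) := by
    rwa [intervalIntegrable_iff_integrableOn_Ioc_of_le (by norm_num)] at h1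
  have h3 : IntegrableOn u (Set.Icc (-1:ℝ) 1) := by
    rwa [integrableOn_Icc_iff_integrableOn_Ioc]
  have h4 : IntegrableOn u (Set.Icc (-1:ℝ) 1)ᶜ :=
    (integrableOn_zero).congr_fun (fun x hx => (hsupp x hx).symm) measurableSet_Icc.compl
  have h5 := h3.union h4
  rwa [Set.union_compl_self, integrableOn_univ] at h5

lemma cdf_nonneg {u : ℝ → ℝ} (hnn : ∀ x, 0 ≤ u x) (t : ℝ) : 0 ≤ cdfOf u t :=
  setIntegral_nonneg measurableSet_Iic fun x _ => hnn x

lemma cdf_mono {u : ℝ → ℝ} (hu : Integrable u) (hnn : ∀ x, 0 ≤ u x) :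
    Monotone (cdfOf u) := fun s t hst =>
  setIntegral_mono_set hu.integrableOn (Filter.Eventually.of_forall hnn)
    (HasSubset.Subset.eventuallyLE (Set.Iic_subset_Iic.2 hst))

lemma cdf_eq_zero {u : ℝ → ℝ}
    (hsupp : ∀ x, x ∉ Set.Icc (-1:ℝ) 1 → u x = 0) {t : ℝ} (ht : t ≤ -1) :
    cdfOf u t = 0 := by
  have h0 : ∀ᵐ x : ℝ, x ∉ ({-1} : Set ℝ) :=
    measure_eq_zero_iff_ae_notMem.mp (measure_singleton _)
  rw [cdfOf]
  rw [show (0:ℝ) = ∫ x in Set.Iic t, (0:ℝ) by simp]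
  apply setIntegral_congr_ae measurableSet_Iic
  filter_upwards [h0] with x hx hxt
  apply hsupp
  intro hxi
  exact hx (by simpa using le_antisymm (hxt.trans ht) hxi.1)

lemma cdf_split {u : ℝ → ℝ} (hu : Integrable u) {a b : ℝ} (hab : a ≤ b) :
    cdfOf u b = cdfOf u a + ∫ x in Set.Ioc a b, u x := by
  rw [cdfOf, cdfOf, ← setIntegral_union (Set.Iic_disjoint_Ioc le_rfl) measurableSet_Ioc
    hu.integrableOn hu.integrableOn, Set.Iic_union_Ioc_eq_Iic hab]

lemma cdf_one {u : ℝ → ℝ} (hu : Integrable u)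
    (hsupp : ∀ x, x ∉ Set.Icc (-1:ℝ) 1 → u x = 0)
    (hint : ∫ x in (-1:ℝ)..1, u x = 1) : cdfOf u 1 = 1 := by
  rw [cdf_split hu (by norm_num : (-1:ℝ) ≤ 1), cdf_eq_zero hsupp le_rfl,
    ← intervalIntegral.integral_of_le (by norm_num : (-1:ℝ) ≤ 1), hint, zero_add]

lemma cdf_ge_one {u : ℝ → ℝ} (hu : Integrable u)
    (hsupp : ∀ x, x ∉ Set.Icc (-1:ℝ) 1 → u x = 0)
    (hint : ∫ x in (-1:ℝ)..1, u x = 1) {t : ℝ} (ht : 1 ≤ t) : cdfOf u t = 1 := by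
  rw [cdf_split hu ht, cdf_one hu hsupp hint]
  have : ∫ x in Set.Ioc (1:ℝ) t, u x = ∫ x in Set.Ioc (1:ℝ) t, (0:ℝ) := by
    apply setIntegral_congr_fun measurableSet_Ioc
    intro x hx
    exact hsupp x (by intro hxi; linarith [hx.1, hxi.2])
  rw [this]; simp

/-- key one-sided quantile bound -/
lemma quantile_le_aux {u v : ℝ → ℝ} {L : ℕ} {h : ℝ}
    (hpos : 0 < h) (hLh : -1 + L * h = 1)
    (humono : Monotone (cdfOf u)) (hvmono : Monotone (cdfOf v))
    (huzero : ∀ t : ℝ, t ≤ -1 → cdfOf u t = 0)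
    (hvzero : ∀ t : ℝ, t ≤ -1 → cdfOf v t = 0)
    (hu1 : cdfOf u 1 = 1) (hv1 : cdfOf v 1 = 1)
    (hgrid : ∀ j : ℕ, j ≤ L → cdfOf u (-1 + j * h) = cdfOf v (-1 + j * h))
    {z : ℝ} (hz : z ∈ Set.Ioo (0:ℝ) 1) :
    quantileOf u z ≤ quantileOf v z + h := by
  classical
  set a := quantileOf v z with ha
  have h1u : (1:ℝ) ∈ {t : ℝ | z ≤ cdfOf u t} := by simp [hu1]; exact hz.2.le
  have h1v : (1:ℝ) ∈ {t : ℝ | z ≤ cdfOf v t} := by simp [hv1]; exact hz.2.le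
  have hlbu : ∀ t ∈ {t : ℝ | z ≤ cdfOf u t}, (-1:ℝ) ≤ t := by
    intro t ht
    by_contra hc
    push_neg at hc
    rw [Set.mem_setOf_eq, huzero t hc.le] at ht
    linarith [hz.1]
  have hlbv : ∀ t ∈ {t : ℝ | z ≤ cdfOf v t}, (-1:ℝ) ≤ t := by
    intro t ht
    by_contra hc
    push_neg at hc
    rw [Set.mem_setOf_eq, hvzero t hc.le] at ht
    linarith [hz.1]
  have hbddu : BddBelow {t : ℝ | z ≤ cdfOf u t} := ⟨-1, hlbu⟩
  have hbddv : BddBelow {t : ℝ | z ≤ cdfOf v t} := ⟨-1, hlbv⟩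
  have ha_ge : (-1:ℝ) ≤ a := le_csInf ⟨1, h1v⟩ hlbv
  have ha_le : a ≤ 1 := csInf_le hbddv h1v
  -- quantile strict property
  have hqlt : ∀ t : ℝ, a < t → z ≤ cdfOf v t := by
    intro t ht
    obtain ⟨s, hs, hst⟩ := exists_lt_of_csInf_lt ⟨1, h1v⟩ ht
    exact le_trans hs (hvmono hst.le)
  rcases lt_or_ge a 1 with hcase | hcase
  · -- find the first grid point above a
    have hPL : a < -1 + (L:ℝ) * h := by rw [hLh]; exact hcase
    have hex : ∃ k : ℕ, a < -1 + (k:ℝ) * h := ⟨L, hPL⟩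
    set k := Nat.find hex with hk
    have hspec : a < -1 + (k:ℝ) * h := Nat.find_spec hex
    have hkL : k ≤ L := Nat.find_le hPL
    have hk0 : k ≠ 0 := by
      intro h0
      rw [h0] at hspec
      simp at hspec
      linarith
    obtain ⟨m, hm⟩ := Nat.exists_eq_succ_of_ne_zero hk0
    have hmin : ¬ a < -1 + (m:ℝ) * h := Nat.find_min hex (by omega)
    push_neg at hmin
    have htk : -1 + (k:ℝ) * h ≤ a + h := by
      rw [hm]; push_cast; nlinarith
    have hz_le : z ≤ cdfOf u (-1 + (k:ℝ) * h) := by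
      rw [hgrid k hkL]
      exact hqlt _ hspec
    exact le_trans (csInf_le hbddu hz_le) htk
  · have : quantileOf u z ≤ 1 := csInf_le hbddu h1u
    linarith

lemma grid_eq {u v : ℝ → ℝ} {L : ℕ} {h : ℝ} (hpos : 0 < h)
    (hu : Integrable u) (hv : Integrable v)
    (husupp : ∀ x, x ∉ Set.Icc (-1:ℝ) 1 → u x = 0)
    (hvsupp : ∀ x, x ∉ Set.Icc (-1:ℝ) 1 → v x = 0)
    (hmass : ∀ j : ℕ, j < L →
      (∫ s in (-1 + j * h)..(-1 + (j + 1) * h), u s)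
        = ∫ s in (-1 + j * h)..(-1 + (j + 1) * h), v s) :
    ∀ j : ℕ, j ≤ L → cdfOf u (-1 + j * h) = cdfOf v (-1 + j * h) := by
  intro j
  induction j with
  | zero =>
      intro _
      simp only [Nat.cast_zero, zero_mul, add_zero]
      rw [cdf_eq_zero husupp le_rfl, cdf_eq_zero hvsupp le_rfl]
  | succ m ih =>
      intro hmL
      have hle : (-1 + (m:ℝ) * h) ≤ -1 + ((m:ℝ) + 1) * h := by nlinarith
      have hcast : ((m + 1 : ℕ) : ℝ) = (m:ℝ) + 1 := by push_cast; ring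
      rw [hcast, cdf_split hu hle, cdf_split hv hle, ih (by omega)]
      congr 1
      have := hmass m (by omega)
      rwa [intervalIntegral.integral_of_le hle, intervalIntegral.integral_of_le hle] at this

/-- If two probability densities `u, ũ` on `[−1, 1]` assign the same mass to every cell
`[t_j, t_{j+1}]` of the uniform grid `t_j = −1 + jh`, `h = 2/L`, then their quantile functions
satisfy `|Q_u(z) − Q_ũ(z)| ≤ h` for all `z ∈ (0, 1)`, and hence `d_{W2}(u, ũ) ≤ h`. -/
theorem equal_cell_mass_w2_bound
    (u v : ℝ → ℝ) (L : ℕ) (hL : 1 ≤ L) (h : ℝ) (hh : h = 2 / L)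
    (hunonneg : ∀ x, 0 ≤ u x) (hvnonneg : ∀ x, 0 ≤ v x)
    (husupp : ∀ x, x ∉ Set.Icc (-1:ℝ) 1 → u x = 0)
    (hvsupp : ∀ x, x ∉ Set.Icc (-1:ℝ) 1 → v x = 0)
    (huint : ∫ x in (-1:ℝ)..1, u x = 1) (hvint : ∫ x in (-1:ℝ)..1, v x = 1)
    (hmass : ∀ j : ℕ, j < L →
      (∫ s in (-1 + j * h)..(-1 + (j + 1) * h), u s)
        = ∫ s in (-1 + j * h)..(-1 + (j + 1) * h), v s) :
    (∀ z ∈ Set.Ioo (0:ℝ) 1, |quantileOf u z - quantileOf v z| ≤ h) ∧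
    wasserstein 2 u v ≤ h := by
  have hLpos : (0:ℝ) < L := by exact_mod_cast hL
  have hpos : 0 < h := by rw [hh]; positivity
  have hLh : -1 + (L:ℝ) * h = 1 := by
    rw [hh]; field_simp; norm_num
  have hu : Integrable u := integrable_of_supp husupp huint
  have hv : Integrable v := integrable_of_supp hvsupp hvint
  have humono := cdf_mono hu hunonneg
  have hvmono := cdf_mono hv hvnonneg
  have huzero : ∀ t : ℝ, t ≤ -1 → cdfOf u t = 0 := fun t ht => cdf_eq_zero husupp ht
  have hvzero : ∀ t : ℝ, t ≤ -1 → cdfOf v t = 0 := fun t ht => cdf_eq_zero hvsupp ht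
  have hu1 := cdf_one hu husupp huint
  have hv1 := cdf_one hv hvsupp hvint
  have hgrid := grid_eq hpos hu hv husupp hvsupp hmass
  have hgrid' : ∀ j : ℕ, j ≤ L → cdfOf v (-1 + j * h) = cdfOf u (-1 + j * h) :=
    fun j hj => (hgrid j hj).symm
  have key : ∀ z ∈ Set.Ioo (0:ℝ) 1, |quantileOf u z - quantileOf v z| ≤ h := by
    intro z hz
    rw [abs_sub_le_iff]
    constructor
    · have := quantile_le_aux hpos hLh humono hvmono huzero hvzero hu1 hv1 hgrid hz
      linarith
    · have := quantile_le_aux hpos hLh hvmono humono hvzero huzero hv1 hu1 hgrid' hz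
      linarith
  refine ⟨key, ?_⟩
  have hWnn : 0 ≤ wassersteinPow 2 u v :=
    setIntegral_nonneg measurableSet_Ioo fun z _ => Real.rpow_nonneg (abs_nonneg _) _
  have hWle : wassersteinPow 2 u v ≤ h ^ (2:ℝ) := by
    have hb := norm_setIntegral_le_of_norm_le_const_ae'
      (μ := volume) (s := Set.Ioo (0:ℝ) 1)
      (f := fun z => |quantileOf u z - quantileOf v z| ^ (2:ℝ)) (C := h ^ (2:ℝ))
      (by simp)
      (Filter.Eventually.of_forall (fun z hz => by
        rw [Real.norm_eq_abs, abs_of_nonneg (Real.rpow_nonneg (abs_nonneg _) _)]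
        exact Real.rpow_le_rpow (abs_nonneg _) (key z hz) (by norm_num)))
    rw [Real.norm_eq_abs] at hb
    have hvol : volume.real (Set.Ioo (0:ℝ) 1) = 1 := by
      simp [Measure.real, Real.volume_Ioo]
    rw [hvol, mul_one] at hb
    exact (abs_le.mp hb).2
  have hfinal : wasserstein 2 u v ≤ (h ^ (2:ℝ)) ^ ((1:ℝ)/2) :=
    Real.rpow_le_rpow hWnn hWle (by norm_num)
  calc wasserstein 2 u v ≤ (h ^ (2:ℝ)) ^ ((1:ℝ)/2) := hfinal
    _ = h := by
        rw [← Real.rpow_mul hpos.le]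
        norm_num
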